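/- arXiv:1409.4331 — 2 statements merged into one kernel-verified Lean document; each statement's English description precedes it below -/
import Mathlib

section
/- For the matrix L₁ = [[2, N, 1],[0, 4, N],[0, 0, 3]] with N ≥ 4, the value max over t in the probability simplex of min_k (tᵀL₁)_k is at most 4. -/
open Matrix Finset

def inSimplex {n : ℕ} (t : Fin (n+1) → ℝ) : Prop :=
  (∀ i, 0 ≤ t i) ∧ ∑ i, t i = 1

noncomputable def minCoord {n : ℕ} (L : Matrix (Fin (n+1)) (Fin (n+1)) ℝ)
    (t : Fin (n+1) → ℝ) : ℝ :=
  univ.inf' univ_nonempty fun k => Matrix.vecMul t L k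


theorem stmt7 (N : ℝ) (hN : 4 ≤ N) (t : Fin 3 → ℝ) (ht : inSimplex t) :
    minCoord (!![2, N, 1; 0, 4, N; 0, 0, 3] : Matrix (Fin 3) (Fin 3) ℝ) t ≤ 4 := by
  obtain ⟨hpos, hsum⟩ := ht
  have h0 : t 0 ≤ 1 := by
    have := Fin.sum_univ_three t ▸ hsum
    nlinarith [hpos 1, hpos 2]
  have hle : minCoord (!![2, N, 1; 0, 4, N; 0, 0, 3] : Matrix (Fin 3) (Fin 3) ℝ) t ≤
      Matrix.vecMul t (!![2, N, 1; 0, 4, N; 0, 0, 3] : Matrix (Fin 3) (Fin 3) ℝ) 0 :=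
    inf'_le _ (mem_univ 0)
  have hv : Matrix.vecMul t (!![2, N, 1; 0, 4, N; 0, 0, 3] : Matrix (Fin 3) (Fin 3) ℝ) 0
      = 2 * t 0 := by
    simp [Matrix.vecMul, dotProduct, Fin.sum_univ_three, Matrix.vecHead, Matrix.vecTail]
    ring
  linarith
end

section
/- Let N be a finite set of players, A a finite set of coalition indices, and for each player j a strategy s_j ∈ A. For a strategy profile s, let C_a(s) = {j : s_j = a}. Suppose each player j has a utility u_j(C) depending only on the coalition set C containing j and the index a. Define the repercussion utility r_j(s) = u_j(C_{s_j}(s)) − Σ_{i ∈ C_{s_j}(s), i ≠ j} [u_i(C_{s_j}(s) \ {j}) − u_i(C_{s_j}(s))], and the social welfare W(s) = Σ_j u_j(C_{s_j}(s)). Then for any player j and any two strategies p, q ∈ A (with other players' strategies s_{−j} fixed), r_j(p, s_{−j}) − r_j(q, s_{−j}) = W(p, s_{−j}) − W(q, s_{−j}). -/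
open Finset

variable {ι A : Type*}

def coalOf [Fintype ι] [DecidableEq A] (s : ι → A) (a : A) : Finset ι :=
  univ.filter fun i => s i = a

noncomputable def welfare [Fintype ι] [DecidableEq A]
    (u : ι → A → Finset ι → ℝ) (s : ι → A) : ℝ :=
  ∑ j, u j (s j) (coalOf s (s j))

noncomputable def reper [Fintype ι] [DecidableEq ι] [DecidableEq A]
    (u : ι → A → Finset ι → ℝ) (s : ι → A) (j : ι) : ℝ :=
  u j (s j) (coalOf s (s j)) -
    ∑ i ∈ (coalOf s (s j)).erase j,
      (u i (s j) ((coalOf s (s j)).erase j) - u i (s j) (coalOf s (s j)))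

lemma aux_reper_welfare [Fintype ι] [DecidableEq ι] [DecidableEq A]
    (u : ι → A → Finset ι → ℝ) (s : ι → A) (j : ι) (p : A) :
    reper u (Function.update s j p) j - welfare u (Function.update s j p) =
      -∑ i ∈ univ.erase j, u i (s i) ((coalOf s (s i)).erase j) := by
  classical
  set sp := Function.update s j p with hsp
  have hspj : sp j = p := Function.update_self j p s
  have hspi : ∀ i, i ≠ j → sp i = s i := fun i hi => Function.update_of_ne hi p s
  set C := coalOf sp p with hC
  have hCE : C.erase j = (univ.erase j).filter fun i => s i = p := by
    ext i
    by_cases hij : i = j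
    · subst hij
      simp
    · simp [hC, coalOf, hspi i hij, hij]
  have hCs : (coalOf s p).erase j = C.erase j := by
    rw [hCE]
    ext i
    simp only [mem_erase, coalOf, mem_filter, mem_univ, true_and]
    tauto
  have hother : ∀ i, i ≠ j → s i ≠ p → coalOf sp (s i) = (coalOf s (s i)).erase j := by
    intro i hij hip
    ext k
    simp only [coalOf, mem_filter, mem_univ, true_and, mem_erase]
    constructor
    · intro hk
      have hkj : k ≠ j := by rintro rfl; rw [hspj] at hk; exact hip hk.symm
      exact ⟨hkj, by rwa [hspi k hkj] at hk⟩
    · rintro ⟨hkj, hk⟩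
      rw [hspi k hkj]; exact hk
  have hw : welfare u sp = u j p C +
      ∑ i ∈ univ.erase j, u i (s i) (coalOf sp (s i)) := by
    rw [welfare, ← Finset.add_sum_erase univ _ (mem_univ j), hspj]
    congr 1
    exact Finset.sum_congr rfl fun i hi => by
      rw [hspi i (mem_erase.mp hi).1]
  have hsplit : ∑ i ∈ univ.erase j, u i (s i) (coalOf sp (s i)) =
      (∑ i ∈ C.erase j, u i p C) +
        ∑ i ∈ (univ.erase j).filter (fun i => ¬ s i = p),
          u i (s i) ((coalOf s (s i)).erase j) := by
    rw [← Finset.sum_filter_add_sum_filter_not (univ.erase j) (fun i => s i = p)]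
    congr 1
    · rw [hCE]
      refine Finset.sum_congr rfl fun i hi => ?_
      obtain ⟨hi1, hi2⟩ := mem_filter.mp hi
      rw [hi2]
    · refine Finset.sum_congr rfl fun i hi => ?_
      obtain ⟨hi1, hi2⟩ := mem_filter.mp hi
      rw [hother i (mem_erase.mp hi1).1 hi2]
  have hrhs : ∑ i ∈ univ.erase j, u i (s i) ((coalOf s (s i)).erase j) =
      (∑ i ∈ C.erase j, u i p (C.erase j)) +
        ∑ i ∈ (univ.erase j).filter (fun i => ¬ s i = p),
          u i (s i) ((coalOf s (s i)).erase j) := by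
    rw [← Finset.sum_filter_add_sum_filter_not (univ.erase j) (fun i => s i = p)]
    congr 1
    rw [hCE]
    refine Finset.sum_congr rfl fun i hi => ?_
    obtain ⟨hi1, hi2⟩ := mem_filter.mp hi
    rw [hi2, hCs, hCE]
  have hrep : reper u sp j = u j p C -
      ∑ i ∈ C.erase j, (u i p (C.erase j) - u i p C) := by
    rw [reper, hspj]
  rw [hrep, hw, hsplit, hrhs, Finset.sum_sub_distrib]
  ring

theorem stmt11 [Fintype ι] [DecidableEq ι] [Fintype A] [DecidableEq A]
    (u : ι → A → Finset ι → ℝ) (s : ι → A) (j : ι) (p q : A) :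
    reper u (Function.update s j p) j - reper u (Function.update s j q) j =
      welfare u (Function.update s j p) - welfare u (Function.update s j q) := by
  have h1 := aux_reper_welfare u s j p
  have h2 := aux_reper_welfare u s j q
  linarith
end
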